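/- Let E, M : F → ℝ with M ≥ 0, E bounded below, and let c = inf { E f : f ∈ F, M f = 0 } (assumed attained or finite). Suppose for every ε > 0 there is δ(ε) > 0 with δ(ε) → 0 as ε → 0, such that for every f with M f ≤ ε there exists f̂ with M f̂ = 0 and E f̂ ≤ E f + δ(ε). Then L(λ) = inf_f (E f + λ M f) converges to c as λ → ∞. -/
import Mathlib


open Filter

/-- Abstract convergence of the penalized objective to the constrained optimum:
if near-feasible points (`M f ≤ ε`) can be repaired to feasible points (`M f̂ = 0`)
at an energy cost `δ ε` which tends to `0` as `ε → 0`, then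
`L(λ) = ⨅ f, (E f + λ * M f)` converges to `c = inf {E f | M f = 0}` as `λ → ∞`. -/
theorem penalized_inf_tendsto_constrained {F : Type*} [Nonempty F]
    (E M : F → ℝ) (b c : ℝ)
    (hM : ∀ f, 0 ≤ M f) (hE : ∀ f, b ≤ E f)
    (hc : IsGLB {e : ℝ | ∃ f, M f = 0 ∧ E f = e} c)
    (δ : ℝ → ℝ) (hδpos : ∀ ε > 0, 0 < δ ε)
    (hδ0 : Tendsto δ (nhdsWithin 0 (Set.Ioi 0)) (nhds 0))
    (hrepair : ∀ ε > 0, ∀ f, M f ≤ ε → ∃ fhat, M fhat = 0 ∧ E fhat ≤ E f + δ ε) :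
    Tendsto (fun l : ℝ => ⨅ f, E f + l * M f) atTop (nhds c) := by
  have hbdd : ∀ l : ℝ, 0 ≤ l → BddBelow (Set.range fun f => E f + l * M f) := by
    intro l hl
    refine ⟨b, ?_⟩
    rintro x ⟨f, rfl⟩
    exact le_add_of_le_of_nonneg (hE f) (mul_nonneg hl (hM f))
  rw [tendsto_order]
  constructor
  · -- lower bound
    intro a ha
    set η := (c - a) / 2 with hη
    have hηpos : 0 < η := by simp only [hη]; linarith
    -- find ε > 0 with δ ε < η
    have hev : ∀ᶠ x in nhdsWithin 0 (Set.Ioi 0), δ x < η :=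
      hδ0.eventually (Filter.Tendsto.eventually_lt_const hηpos tendsto_id |>.mono fun _ h => h)
    obtain ⟨ε, hεpos, hδε⟩ : ∃ ε > 0, δ ε < η := by
      rcases (hev.and self_mem_nhdsWithin).exists with ⟨ε, h1, h2⟩
      exact ⟨ε, h2, h1⟩
    filter_upwards [eventually_ge_atTop (max 0 ((c - b) / ε))] with l hl
    have hl0 : 0 ≤ l := le_trans (le_max_left _ _) hl
    have hl1 : (c - b) / ε ≤ l := le_trans (le_max_right _ _) hl
    have key : ∀ f, c - η ≤ E f + l * M f := by
      intro f
      by_cases hMf : M f ≤ ε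
      · obtain ⟨fhat, hfhat0, hfhatE⟩ := hrepair ε hεpos f hMf
        have hcle : c ≤ E fhat := hc.1 ⟨fhat, hfhat0, rfl⟩
        nlinarith [mul_nonneg hl0 (hM f)]
      · push_neg at hMf
        have : c - b ≤ l * ε := by
          calc c - b = (c - b) / ε * ε := by field_simp
          _ ≤ l * ε := by nlinarith
        nlinarith [hE f]
    have : c - η ≤ ⨅ f, E f + l * M f := le_ciInf key
    have : a < c - η := by simp only [hη]; linarith
    linarith [le_ciInf key]
  · -- upper bound
    intro a ha
    obtain ⟨e, ⟨f, hf0, rfl⟩, hea⟩ : ∃ e ∈ {e : ℝ | ∃ f, M f = 0 ∧ E f = e}, e < a := by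
      by_contra h
      push_neg at h
      exact absurd (hc.2 fun e he => h e he) (not_le.2 ha)
    filter_upwards [eventually_ge_atTop (0 : ℝ)] with l hl
    calc (⨅ f, E f + l * M f) ≤ E f + l * M f := ciInf_le (hbdd l hl) f
      _ = E f := by rw [hf0, mul_zero, add_zero]
      _ < a := hea
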